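/- arXiv:0809.4964 — 2 statements merged into one kernel-verified Lean document; each statement's English description precedes it below -/
import Mathlib

section
/- Let (X, 𝒰) be a quasi-uniform space and A a τ(𝒰^s)-dense subset of X. If ℱ is a doubly stable filter on (X, 𝒰), then {U_ℱ ∩ A : U ∈ 𝒰} is a base for a doubly stable filter on the subspace (A, 𝒰|A), and the filter it generates on X is 𝒰_D-equivalent to ℱ. -/
open Filter Set

variable {X Y : Type*}

/-- Image of a set under a relation: `U(A) = {y : ∃ x ∈ A, (x,y) ∈ U}`. -/
def relImg (U : Set (X × X)) (A : Set X) : Set X := {y | ∃ x ∈ A, (x, y) ∈ U}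

/-- Inverse image: `U⁻¹(A) = {y : ∃ x ∈ A, (y,x) ∈ U}`. -/
def relPre (U : Set (X × X)) (A : Set X) : Set X := {y | ∃ x ∈ A, (y, x) ∈ U}

/-- A quasi-uniformity: a filter of reflexive relations, each containing
a relational square of a member. -/
structure IsQuasiUniformity (𝒰 : Filter (X × X)) : Prop where
  refl : ∀ U ∈ 𝒰, SetRel.id ⊆ U
  comp : ∀ U ∈ 𝒰, ∃ V ∈ 𝒰, SetRel.comp V V ⊆ U

/-- A filter is stable if `⋂_{F ∈ ℱ} U(F) ∈ ℱ` for all `U ∈ 𝒰`. -/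
def IsStable (𝒰 : Filter (X × X)) (ℱ : Filter X) : Prop :=
  ∀ U ∈ 𝒰, (⋂ F ∈ ℱ.sets, relImg U F) ∈ ℱ

/-- `U_ℱ = ⋂_{F ∈ ℱ} (U⁻¹(F) ∩ U(F))`. -/
def bigU (U : Set (X × X)) (ℱ : Filter X) : Set X :=
  ⋂ F ∈ ℱ.sets, (relPre U F ∩ relImg U F)

/-- A filter is doubly stable if `U_ℱ ∈ ℱ` for all `U ∈ 𝒰`. -/
def IsDoublyStable (𝒰 : Filter (X × X)) (ℱ : Filter X) : Prop :=
  ∀ U ∈ 𝒰, bigU U ℱ ∈ ℱ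

/-- The 2-envelope of a filter. -/
def envelope (𝒰 : Filter (X × X)) (ℱ : Filter X) : Filter X :=
  Filter.generate {S | ∃ U ∈ 𝒰, ∃ F ∈ ℱ, S = relPre U F ∩ relImg U F}

/-- The filter `ℱ_𝒰` generated by `{U_ℱ : U ∈ 𝒰}`. -/
def filterU (𝒰 : Filter (X × X)) (ℱ : Filter X) : Filter X :=
  Filter.generate {S | ∃ U ∈ 𝒰, S = bigU U ℱ}

/-- `τ(𝒰)`-cluster points of a filter. -/
def fwdCluster (𝒰 : Filter (X × X)) (ℱ : Filter X) : Set X :=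
  {x | ∀ F ∈ ℱ, ∀ U ∈ 𝒰, ∃ y ∈ F, (x, y) ∈ U}

/-- `τ(𝒰⁻¹)`-cluster points of a filter. -/
def bwdCluster (𝒰 : Filter (X × X)) (ℱ : Filter X) : Set X :=
  {x | ∀ F ∈ ℱ, ∀ U ∈ 𝒰, ∃ y ∈ F, (y, x) ∈ U}

/-- The set of double cluster points of a filter. -/
def doubleCluster (𝒰 : Filter (X × X)) (ℱ : Filter X) : Set X :=
  fwdCluster 𝒰 ℱ ∩ bwdCluster 𝒰 ℱ

/-- The basic entourage `U_D = U_+ ∩ U_-` of the stability quasi-uniformity. -/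
def UD (U : Set (X × X)) : Set (Filter X × Filter X) :=
  {p | (⋂ F ∈ p.1.sets, relImg U F) ∈ p.2 ∧ (⋂ G ∈ p.2.sets, relPre U G) ∈ p.1}

/-- The subspace quasi-uniformity on a subset `A`. -/
def subUniformity (𝒰 : Filter (X × X)) (A : Set X) : Filter (A × A) :=
  Filter.comap (fun p : A × A => ((p.1 : X), (p.2 : X))) 𝒰

/-- `A` is `τ(𝒰^s)`-dense in `X`. -/
def IsDenseS (𝒰 : Filter (X × X)) (A : Set X) : Prop :=
  ∀ x : X, ∀ U ∈ 𝒰, ∃ a ∈ A, (x, a) ∈ U ∧ (a, x) ∈ U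

lemma mem_bigU {U : Set (X × X)} {ℱ : Filter X} {x : X} :
    x ∈ bigU U ℱ ↔ ∀ F ∈ ℱ, (∃ f ∈ F, (x, f) ∈ U) ∧ ∃ f ∈ F, (f, x) ∈ U := by
  simp only [bigU, mem_iInter, mem_inter_iff]
  exact ⟨fun h F hF => h F hF, fun h F hF => h F hF⟩

lemma bigU_mono {U V : Set (X × X)} (h : U ⊆ V) (ℱ : Filter X) :
    bigU U ℱ ⊆ bigU V ℱ := by
  intro x hx
  rw [mem_bigU] at hx ⊢
  intro F hF
  obtain ⟨⟨f, hf, hxf⟩, g, hg, hgx⟩ := hx F hF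
  exact ⟨⟨f, hf, h hxf⟩, g, hg, h hgx⟩

lemma mem_filterU {𝒰 : Filter (X × X)} {ℱ : Filter X} {S : Set X} :
    S ∈ filterU 𝒰 ℱ ↔ ∃ U ∈ 𝒰, bigU U ℱ ⊆ S := by
  constructor
  · intro hS
    rw [filterU, Filter.mem_generate_iff] at hS
    obtain ⟨t, hts, htf, hsub⟩ := hS
    have hts' : ∀ s ∈ t, ∃ U ∈ 𝒰, s = bigU U ℱ := hts
    choose! u hu hequ using hts'
    refine ⟨⋂ s ∈ t, u s, (Filter.biInter_mem htf).mpr hu, ?_⟩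
    refine subset_trans ?_ hsub
    intro x hx
    intro s hs
    rw [hequ s hs]
    exact bigU_mono (biInter_subset_of_mem hs) ℱ hx
  · rintro ⟨U, hU, hsub⟩
    exact Filter.mem_of_superset
      (Filter.mem_generate_of_mem ⟨U, hU, rfl⟩) hsub

/-- A small entourage square lets us transfer `bigU` along a two-sided link. -/
lemma bigU_transfer {V₂ V : Set (X × X)} (hV₂ : SetRel.comp V₂ V₂ ⊆ V)
    {ℱ : Filter X} {y a : X} (hy : y ∈ bigU V₂ ℱ)
    (hya : (y, a) ∈ V₂) (hay : (a, y) ∈ V₂) : a ∈ bigU V ℱ := by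
  rw [mem_bigU] at hy ⊢
  intro F hF
  obtain ⟨⟨f, hf, hyf⟩, g, hg, hgy⟩ := hy F hF
  exact ⟨⟨f, hf, hV₂ ⟨y, hay, hyf⟩⟩, g, hg, hV₂ ⟨y, hgy, hya⟩⟩

/-- Key approximation: any point of `bigU W ℱ` (with `W ∘ W ⊆ U`) can be
`U`-linked, in both directions, to points of `bigU V ℱ ∩ A` for every `V`. -/
lemma key_approx {𝒰 : Filter (X × X)} (h𝒰 : IsQuasiUniformity 𝒰)
    {A : Set X} (hA : IsDenseS 𝒰 A) {ℱ : Filter X} (hds : IsDoublyStable 𝒰 ℱ)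
    {U W : Set (X × X)} (hW : W ∈ 𝒰) (hWU : SetRel.comp W W ⊆ U)
    {x : X} (hx : x ∈ bigU W ℱ) {V : Set (X × X)} (hV : V ∈ 𝒰) :
    (∃ a ∈ bigU V ℱ ∩ A, (x, a) ∈ U) ∧ (∃ a ∈ bigU V ℱ ∩ A, (a, x) ∈ U) := by
  obtain ⟨V₂, hV₂mem, hV₂⟩ := h𝒰.comp (V ∩ W) (Filter.inter_mem hV hW)
  have hV₂sub : V₂ ⊆ V ∩ W := fun p hp =>
    hV₂ ⟨p.1, h𝒰.refl V₂ hV₂mem rfl, hp⟩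
  have hV₂V : SetRel.comp V₂ V₂ ⊆ V := fun p hp => (hV₂ hp).1
  have hF := hds V₂ hV₂mem
  rw [mem_bigU] at hx
  obtain ⟨⟨y, hy, hxy⟩, y', hy', hy'x⟩ := hx _ hF
  constructor
  · obtain ⟨a, haA, hya, hay⟩ := hA y V₂ hV₂mem
    refine ⟨a, ⟨bigU_transfer hV₂V hy hya hay, haA⟩, ?_⟩
    exact hWU ⟨y, hxy, (hV₂sub hya).2⟩
  · obtain ⟨a, haA, hy'a, hay'⟩ := hA y' V₂ hV₂mem
    refine ⟨a, ⟨bigU_transfer hV₂V hy' hy'a hay', haA⟩, ?_⟩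
    exact hWU ⟨y', (hV₂sub hay').2, hy'x⟩

lemma mem_comap_filterU {𝒰 : Filter (X × X)} {ℱ : Filter X} {A : Set X}
    {G : Set A} :
    G ∈ Filter.comap (Subtype.val : A → X) (filterU 𝒰 ℱ) ↔
      ∃ U ∈ 𝒰, (Subtype.val : A → X) ⁻¹' (bigU U ℱ) ⊆ G := by
  rw [Filter.mem_comap]
  constructor
  · rintro ⟨S, hS, hsub⟩
    obtain ⟨U, hU, hU'⟩ := mem_filterU.mp hS
    exact ⟨U, hU, subset_trans (fun a ha => hU' ha) hsub⟩
  · rintro ⟨U, hU, hsub⟩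
    exact ⟨bigU U ℱ, mem_filterU.mpr ⟨U, hU, subset_rfl⟩, hsub⟩

lemma mem_map_comap_filterU {𝒰 : Filter (X × X)} {ℱ : Filter X} {A : Set X}
    {T : Set X} :
    T ∈ Filter.map (Subtype.val : A → X)
        (Filter.comap (Subtype.val : A → X) (filterU 𝒰 ℱ)) ↔
      ∃ U ∈ 𝒰, bigU U ℱ ∩ A ⊆ T := by
  rw [Filter.mem_map, mem_comap_filterU]
  constructor
  · rintro ⟨U, hU, hsub⟩
    exact ⟨U, hU, fun x hx => hsub (show (⟨x, hx.2⟩ : A) ∈ _ from hx.1)⟩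
  · rintro ⟨U, hU, hsub⟩
    exact ⟨U, hU, fun a ha => hsub ⟨ha, a.2⟩⟩

theorem stmt16 (𝒰 : Filter (X × X)) (h𝒰 : IsQuasiUniformity 𝒰)
    (A : Set X) (hA : IsDenseS 𝒰 A) (ℱ : Filter X) (hds : IsDoublyStable 𝒰 ℱ) :
    IsDoublyStable (subUniformity 𝒰 A)
        (Filter.comap (Subtype.val : A → X) (filterU 𝒰 ℱ)) ∧
    (∀ U ∈ 𝒰,
      (ℱ, Filter.map (Subtype.val : A → X)
            (Filter.comap (Subtype.val : A → X) (filterU 𝒰 ℱ))) ∈ UD U ∧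
      (Filter.map (Subtype.val : A → X)
            (Filter.comap (Subtype.val : A → X) (filterU 𝒰 ℱ)), ℱ) ∈ UD U) := by
  constructor
  · -- double stability of the trace filter
    intro W' hW'
    obtain ⟨U, hU, hUsub⟩ := Filter.mem_comap.mp hW'
    obtain ⟨W, hWmem, hW⟩ := h𝒰.comp U hU
    refine mem_comap_filterU.mpr ⟨W, hWmem, ?_⟩
    intro a ha
    rw [mem_bigU]
    intro G hG
    obtain ⟨V, hV, hVsub⟩ := mem_comap_filterU.mp hG
    obtain ⟨⟨b, ⟨hb, hbA⟩, hab⟩, c, ⟨hc, hcA⟩, hca⟩ :=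
      key_approx h𝒰 hA hds hWmem hW ha hV
    exact ⟨⟨⟨b, hbA⟩, hVsub hb, hUsub hab⟩, ⟨c, hcA⟩, hVsub hc, hUsub hca⟩
  · intro U hU
    obtain ⟨W, hWmem, hW⟩ := h𝒰.comp U hU
    have hbase : bigU U ℱ ∩ A ∈ Filter.map (Subtype.val : A → X)
        (Filter.comap (Subtype.val : A → X) (filterU 𝒰 ℱ)) :=
      mem_map_comap_filterU.mpr ⟨U, hU, subset_rfl⟩
    constructor
    · constructor
      · -- ⋂_{F ∈ ℱ} U(F) ∈ 𝒢'
        refine Filter.mem_of_superset hbase ?_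
        intro x hx
        rw [mem_iInter₂]
        intro F hF
        exact ((mem_bigU.mp hx.1 F hF).2).imp fun f hf => ⟨hf.1, hf.2⟩
      · -- ⋂_{G ∈ 𝒢'} U⁻¹(G) ∈ ℱ
        refine Filter.mem_of_superset (hds W hWmem) ?_
        intro x hx
        rw [mem_iInter₂]
        intro G hG
        obtain ⟨V, hV, hVsub⟩ := mem_map_comap_filterU.mp hG
        obtain ⟨⟨a, haVA, hxa⟩, -⟩ := key_approx h𝒰 hA hds hWmem hW hx hV
        exact ⟨a, hVsub haVA, hxa⟩
    · constructor
      · -- ⋂_{G ∈ 𝒢'} U(G) ∈ ℱ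
        refine Filter.mem_of_superset (hds W hWmem) ?_
        intro x hx
        rw [mem_iInter₂]
        intro G hG
        obtain ⟨V, hV, hVsub⟩ := mem_map_comap_filterU.mp hG
        obtain ⟨-, a, haVA, hax⟩ := key_approx h𝒰 hA hds hWmem hW hx hV
        exact ⟨a, hVsub haVA, hax⟩
      · -- ⋂_{F ∈ ℱ} U⁻¹(F) ∈ 𝒢'
        refine Filter.mem_of_superset hbase ?_
        intro x hx
        rw [mem_iInter₂]
        intro F hF
        exact ((mem_bigU.mp hx.1 F hF).1).imp fun f hf => ⟨hf.1, hf.2⟩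
end

section
/- Let (X, 𝒰) be a quasi-uniform space. If ℱ is a doubly stable filter on (X, 𝒰), then the net (𝒞_F)_{F ∈ (ℱ, ⊇)} of principal filters, indexed by the members of ℱ directed by reverse inclusion, is a (𝒰_D)^s-Cauchy net in (S_D(X), 𝒰_D) and converges to ℱ in the topology τ((𝒰_D)^s). Consequently the set of principal filters {𝒞_C : C ∈ 𝒫₀(X)} is τ((𝒰_D)^s)-dense in S_D(X). -/
open Filter Set

variable {X Y : Type*}

lemma relImg_mono {U : Set (X × X)} {A B : Set X} (h : A ⊆ B) :
    relImg U A ⊆ relImg U B := fun _ ⟨x, hx, hxy⟩ => ⟨x, h hx, hxy⟩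

lemma relPre_mono {U : Set (X × X)} {A B : Set X} (h : A ⊆ B) :
    relPre U A ⊆ relPre U B := fun _ ⟨x, hx, hxy⟩ => ⟨x, h hx, hxy⟩

lemma iInter_principal_img (U : Set (X × X)) (F : Set X) :
    (⋂ G ∈ (Filter.principal F).sets, relImg U G) = relImg U F := by
  apply subset_antisymm
  · exact biInter_subset_of_mem (Filter.mem_principal_self F)
  · intro x hx
    simp only [mem_iInter]
    intro G hG
    exact relImg_mono (Filter.mem_principal.mp hG) hx

lemma iInter_principal_pre (U : Set (X × X)) (F : Set X) :
    (⋂ G ∈ (Filter.principal F).sets, relPre U G) = relPre U F := by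
  apply subset_antisymm
  · exact biInter_subset_of_mem (Filter.mem_principal_self F)
  · intro x hx
    simp only [mem_iInter]
    intro G hG
    exact relPre_mono (Filter.mem_principal.mp hG) hx

lemma bigU_subset_img {U : Set (X × X)} {ℱ : Filter X} {G : Set X} (hG : G ∈ ℱ) :
    bigU U ℱ ⊆ relImg U G := fun x hx => by
  have := mem_iInter.mp hx G
  exact (mem_iInter.mp this hG).2

lemma bigU_subset_pre {U : Set (X × X)} {ℱ : Filter X} {G : Set X} (hG : G ∈ ℱ) :
    bigU U ℱ ⊆ relPre U G := fun x hx => by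
  have := mem_iInter.mp hx G
  exact (mem_iInter.mp this hG).1

theorem stmt17 (𝒰 : Filter (X × X)) (h𝒰 : IsQuasiUniformity 𝒰)
    (ℱ : Filter X) (hne : ℱ.NeBot) (hds : IsDoublyStable 𝒰 ℱ) :
    (∀ U ∈ 𝒰, ∃ F₀ ∈ ℱ, ∀ F₁ ∈ ℱ.sets, ∀ F₂ ∈ ℱ.sets, F₁ ⊆ F₀ → F₂ ⊆ F₀ →
      (Filter.principal F₁, Filter.principal F₂) ∈ UD U ∧
      (Filter.principal F₂, Filter.principal F₁) ∈ UD U) ∧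
    (∀ U ∈ 𝒰, ∃ F₀ ∈ ℱ, ∀ F ∈ ℱ.sets, F ⊆ F₀ →
      (ℱ, Filter.principal F) ∈ UD U ∧ (Filter.principal F, ℱ) ∈ UD U) ∧
    (∀ U ∈ 𝒰, ∃ C : Set X, C.Nonempty ∧
      (ℱ, Filter.principal C) ∈ UD U ∧ (Filter.principal C, ℱ) ∈ UD U) := by
  have main2 : ∀ U ∈ 𝒰, ∃ F₀ ∈ ℱ, ∀ F ∈ ℱ.sets, F ⊆ F₀ →
      (ℱ, Filter.principal F) ∈ UD U ∧ (Filter.principal F, ℱ) ∈ UD U := by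
    intro U hU
    refine ⟨bigU U ℱ, hds U hU, fun F hF hsub => ?_⟩
    have hFself : F ⊆ bigU U ℱ := hsub
    constructor
    · constructor
      · -- ⋂_{G∈ℱ} relImg U G ∈ 𝓟 F
        rw [Filter.mem_principal]
        intro x hx
        simp only [mem_iInter]
        intro G hG
        exact bigU_subset_img hG (hFself hx)
      · -- ⋂_{G∈𝓟F} relPre U G ∈ ℱ
        rw [iInter_principal_pre]
        exact ℱ.sets_of_superset hF (fun x hx => ⟨x, hx, h𝒰.refl U hU rfl⟩)
    · constructor
      · -- ⋂_{G∈𝓟F} relImg U G ∈ ℱ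
        rw [iInter_principal_img]
        exact ℱ.sets_of_superset hF (fun x hx => ⟨x, hx, h𝒰.refl U hU rfl⟩)
      · -- ⋂_{G∈ℱ} relPre U G ∈ 𝓟 F
        rw [Filter.mem_principal]
        intro x hx
        simp only [mem_iInter]
        intro G hG
        exact bigU_subset_pre hG (hFself hx)
  refine ⟨?_, main2, ?_⟩
  · intro U hU
    refine ⟨bigU U ℱ, hds U hU, fun F₁ hF₁ F₂ hF₂ h₁ h₂ => ?_⟩
    have key : ∀ A B : Set X, A ∈ ℱ → B ∈ ℱ → A ⊆ bigU U ℱ → B ⊆ bigU U ℱ →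
        (Filter.principal A, Filter.principal B) ∈ UD U := by
      intro A B hA hB hAs hBs
      constructor
      · rw [iInter_principal_img, Filter.mem_principal]
        intro x hx
        exact bigU_subset_img hA (hBs hx)
      · rw [iInter_principal_pre, Filter.mem_principal]
        intro x hx
        exact bigU_subset_pre hB (hAs hx)
    exact ⟨key F₁ F₂ hF₁ hF₂ h₁ h₂, key F₂ F₁ hF₂ hF₁ h₂ h₁⟩
  · intro U hU
    obtain ⟨F₀, hF₀, h⟩ := main2 U hU
    exact ⟨F₀, Filter.nonempty_of_mem hF₀, h F₀ hF₀ (subset_refl _)⟩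
end
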